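/- Let g ≥ 1 be an integer, let e_1, …, e_{2g+2} be complex numbers, and let f(x) = ∏_{m=1}^{2g+2} (x − e_m). For every x ∈ ℂ with f(x) ≠ 0, the sum over all (g+1)-element subsets S of {1, …, 2g+2} satisfies ∑_S ( 2 ∑_{i∈S} 1/(x − e_i) − f′(x)/f(x) )² = 2 C(2g+1, g) · ( (2g+1) f′(x)² − 2(g+1) f(x) f″(x) ) / ( (2g+1) f(x)² ). -/

import Mathlib

open Finset

variable {α : Type*} [DecidableEq α]

lemma myCard_filter_mem (s : Finset α) (i : α) (hi : i ∈ s) (k : ℕ) :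
    (((s.powersetCard (k+1)).filter (fun S => i ∈ S))).card = (s.erase i).card.choose k := by
  rw [← card_powersetCard]
  refine card_bij' (fun S _ => S.erase i) (fun T _ => insert i T) ?_ ?_ ?_ ?_
  · intro S hS
    simp only [mem_filter, mem_powersetCard] at hS
    obtain ⟨⟨hsub, hcard⟩, hiS⟩ := hS
    rw [mem_powersetCard]
    exact ⟨fun a ha => mem_erase.2 ⟨(mem_erase.1 ha).1, hsub (mem_erase.1 ha).2⟩,
      by rw [card_erase_of_mem hiS, hcard]; rfl⟩
  · intro T hT
    rw [mem_powersetCard] at hT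
    have hiT : i ∉ T := fun h => (mem_erase.1 (hT.1 h)).1 rfl
    simp only [mem_filter, mem_powersetCard]
    refine ⟨⟨?_, ?_⟩, mem_insert_self _ _⟩
    · intro a ha
      rcases mem_insert.1 ha with rfl | h
      · exact hi
      · exact (erase_subset _ _) (hT.1 h)
    · rw [card_insert_of_notMem hiT, hT.2]
  · intro S hS
    simp only [mem_filter] at hS
    exact insert_erase hS.2
  · intro T hT
    rw [mem_powersetCard] at hT
    have hiT : i ∉ T := fun h => (mem_erase.1 (hT.1 h)).1 rfl
    exact erase_insert hiT

lemma myCard_filter_pair (s : Finset α) (i j : α) (hij : i ≠ j) (hi : i ∈ s) (hj : j ∈ s) (k : ℕ) :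
    (((s.powersetCard (k+2)).filter (fun S => i ∈ S ∧ j ∈ S))).card
      = ((s.erase i).erase j).card.choose k := by
  have step : (((s.powersetCard (k+2)).filter (fun S => i ∈ S ∧ j ∈ S))).card
      = ((((s.erase i).powersetCard (k+1)).filter (fun S => j ∈ S))).card := by
    refine card_bij' (fun S _ => S.erase i) (fun T _ => insert i T) ?_ ?_ ?_ ?_
    · intro S hS
      simp only [mem_filter, mem_powersetCard] at hS ⊢
      obtain ⟨⟨hsub, hcard⟩, hiS, hjS⟩ := hS
      refine ⟨⟨fun a ha => mem_erase.2 ⟨(mem_erase.1 ha).1, hsub (mem_erase.1 ha).2⟩, ?_⟩,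
        mem_erase.2 ⟨hij.symm, hjS⟩⟩
      rw [card_erase_of_mem hiS, hcard]; rfl
    · intro T hT
      simp only [mem_filter, mem_powersetCard] at hT ⊢
      obtain ⟨⟨hsub, hcard⟩, hjT⟩ := hT
      have hiT : i ∉ T := fun h => (mem_erase.1 (hsub h)).1 rfl
      refine ⟨⟨?_, ?_⟩, mem_insert_self _ _, mem_insert_of_mem hjT⟩
      · intro a ha
        rcases mem_insert.1 ha with rfl | h
        · exact hi
        · exact (erase_subset _ _) (hsub h)
      · rw [card_insert_of_notMem hiT, hcard]
    · intro S hS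
      simp only [mem_filter] at hS
      exact insert_erase hS.2.1
    · intro T hT
      simp only [mem_filter, mem_powersetCard] at hT
      have hiT : i ∉ T := fun h => (mem_erase.1 (hT.1.1 h)).1 rfl
      exact erase_insert hiT
  rw [step, myCard_filter_mem (s.erase i) j (mem_erase.2 ⟨hij.symm, hj⟩) k]

lemma mySum_subsets_single (k : ℕ) (s : Finset α) (v : α → ℂ) :
    ∑ S ∈ s.powersetCard k, ∑ i ∈ S, v i
      = ∑ i ∈ s, (((s.powersetCard k).filter (fun S => i ∈ S)).card : ℂ) * v i := by
  have h1 : ∀ S ∈ s.powersetCard k, ∑ i ∈ S, v i = ∑ i ∈ s, if i ∈ S then v i else 0 := by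
    intro S hS
    rw [sum_ite_mem, inter_eq_right.2 (mem_powersetCard.1 hS).1]
  rw [sum_congr rfl h1, Finset.sum_comm]
  refine sum_congr rfl fun i _ => ?_
  rw [← sum_filter, sum_const, nsmul_eq_mul]

lemma mySum_subsets_pair (k : ℕ) (s : Finset α) (w : α → α → ℂ) :
    ∑ S ∈ s.powersetCard k, ∑ i ∈ S, ∑ j ∈ S.erase i, w i j
      = ∑ i ∈ s, ∑ j ∈ s.erase i,
          (((s.powersetCard k).filter (fun S => i ∈ S ∧ j ∈ S)).card : ℂ) * w i j := by
  have h1 : ∀ S ∈ s.powersetCard k, ∑ i ∈ S, ∑ j ∈ S.erase i, w i j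
      = ∑ i ∈ s, ∑ j ∈ s.erase i, if i ∈ S ∧ j ∈ S then w i j else 0 := by
    intro S hS
    have hSs : S ⊆ s := (mem_powersetCard.1 hS).1
    have h2 : ∀ i, ∑ j ∈ s.erase i, (if i ∈ S ∧ j ∈ S then w i j else 0)
        = if i ∈ S then ∑ j ∈ S.erase i, w i j else 0 := by
      intro i
      by_cases hiS : i ∈ S
      · simp only [hiS, true_and, if_true]
        rw [sum_ite_mem]
        congr 1
        ext j
        simp only [mem_inter, mem_erase]
        exact ⟨fun ⟨⟨hji, _⟩, hjS⟩ => ⟨hji, hjS⟩, fun ⟨hji, hjS⟩ => ⟨⟨hji, hSs hjS⟩, hjS⟩⟩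
      · simp [hiS]
    rw [sum_congr rfl fun i _ => h2 i, ← sum_filter]
    congr 1
    ext i
    simp only [mem_filter]
    exact ⟨fun h => ⟨hSs h, h⟩, fun h => h.2⟩
  rw [sum_congr rfl h1, Finset.sum_comm]
  refine sum_congr rfl fun i _ => ?_
  rw [Finset.sum_comm]
  refine sum_congr rfl fun j _ => ?_
  rw [← sum_filter, sum_const, nsmul_eq_mul]

theorem sum_over_subsets_of_log_derivative_sq
    (g : ℕ) (hg : 1 ≤ g) (e : Fin (2 * g + 2) → ℂ)
    (f : ℂ → ℂ) (hf : f = fun x => ∏ m, (x - e m))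
    (x : ℂ) (hx : f x ≠ 0) :
    ∑ S ∈ Finset.powersetCard (g + 1) (Finset.univ : Finset (Fin (2 * g + 2))),
        (2 * ∑ i ∈ S, 1 / (x - e i) - deriv f x / f x) ^ 2
      = 2 * (Nat.choose (2 * g + 1) g : ℂ) *
          ((2 * (g : ℂ) + 1) * (deriv f x) ^ 2 - 2 * ((g : ℂ) + 1) * f x * deriv (deriv f) x) /
          ((2 * (g : ℂ) + 1) * (f x) ^ 2) := by
  subst hf
  set F : ℂ := ∏ m, (x - e m) with hF
  have hne : ∀ m, x - e m ≠ 0 := by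
    intro m hm
    exact hx (prod_eq_zero (mem_univ m) hm)
  set u : Fin (2 * g + 2) → ℂ := fun i => (x - e i)⁻¹ with hu
  set B : ℂ := ∑ i, u i with hB
  set A : ℂ := ∑ i, u i ^ 2 with hA
  -- differentiability
  have hdm : ∀ (m : Fin (2 * g + 2)) (y : ℂ), HasDerivAt (fun z => z - e m) 1 y := by
    intro m y
    simpa using (hasDerivAt_id y).sub_const (e m)
  -- first derivative
  have hD1 : ∀ y : ℂ, deriv (fun z => ∏ m, (z - e m)) y
      = ∑ i, ∏ m ∈ univ.erase i, (y - e m) := by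
    intro y
    have := (HasDerivAt.fun_finsetProd (u := univ)
      (f := fun m (z : ℂ) => z - e m) (f' := fun _ => 1) (fun i _ => hdm i y)).deriv
    simpa using this
  -- erase products
  have hpe : ∀ i : Fin (2 * g + 2), ∏ m ∈ univ.erase i, (x - e m) = F * u i := by
    intro i
    have h : (x - e i) * ∏ m ∈ univ.erase i, (x - e m) = F :=
      mul_prod_erase univ (fun m => x - e m) (mem_univ i)
    show ∏ m ∈ univ.erase i, (x - e m) = F * (x - e i)⁻¹
    rw [← h, mul_comm (x - e i), mul_inv_cancel_right₀ (hne i)]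
  have hpe2 : ∀ (i : Fin (2 * g + 2)), ∀ j ∈ univ.erase i,
      ∏ m ∈ (univ.erase i).erase j, (x - e m) = F * u i * u j := by
    intro i j hj
    have h : (x - e j) * ∏ m ∈ (univ.erase i).erase j, (x - e m)
        = ∏ m ∈ univ.erase i, (x - e m) :=
      mul_prod_erase (univ.erase i) (fun m => x - e m) hj
    have h2 : ∏ m ∈ (univ.erase i).erase j, (x - e m)
        = ((x - e j) * ∏ m ∈ (univ.erase i).erase j, (x - e m)) * (x - e j)⁻¹ := by
      rw [mul_comm (x - e j), mul_inv_cancel_right₀ (hne j)]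
    rw [h2, h, hpe i]
  have hD1x : deriv (fun z => ∏ m, (z - e m)) x = F * B := by
    rw [hD1 x]
    rw [sum_congr rfl fun i _ => hpe i, ← mul_sum, ← hB]
  -- second derivative
  have hderiv_eq : deriv (fun z => ∏ m, (z - e m))
      = fun y => ∑ i, ∏ m ∈ univ.erase i, (y - e m) := funext hD1
  have h1 : ∀ i : Fin (2 * g + 2), ∑ j ∈ univ.erase i, u j = B - u i := by
    intro i
    have h := Finset.add_sum_erase univ u (mem_univ i)
    rw [hB]
    linear_combination h
  have pairsum : ∑ i, ∑ j ∈ univ.erase i, u i * u j = B ^ 2 - A := by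
    have h2 : ∀ i ∈ (univ : Finset (Fin (2 * g + 2))),
        ∑ j ∈ univ.erase i, u i * u j = u i * B - u i ^ 2 := by
      intro i _
      rw [← mul_sum, h1 i]
      ring
    rw [sum_congr rfl h2, sum_sub_distrib, ← sum_mul, ← hB, ← hA]
    ring
  have hD2x : deriv (deriv (fun z => ∏ m, (z - e m))) x = F * (B ^ 2 - A) := by
    rw [hderiv_eq]
    have hdiffprod : ∀ (i : Fin (2 * g + 2)),
        HasDerivAt (fun y => ∏ m ∈ univ.erase i, (y - e m))
          (∑ j ∈ univ.erase i, (∏ m ∈ (univ.erase i).erase j, (x - e m)) • (1:ℂ)) x :=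
      fun i => HasDerivAt.fun_finsetProd (fun j _ => hdm j x)
    rw [deriv_fun_sum (u := univ) (A := fun i y => ∏ m ∈ univ.erase i, (y - e m))
      (fun i _ => (hdiffprod i).differentiableAt)]
    have h3 : ∀ i ∈ (univ : Finset (Fin (2 * g + 2))),
        deriv (fun y => ∏ m ∈ univ.erase i, (y - e m)) x
        = F * ∑ j ∈ univ.erase i, u i * u j := by
      intro i _
      rw [(hdiffprod i).deriv, mul_sum]
      refine sum_congr rfl fun j hj => ?_
      rw [smul_eq_mul, mul_one, hpe2 i j hj]
      ring
    rw [sum_congr rfl h3, ← mul_sum, pairsum]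
  have hF0 : F ≠ 0 := hx
  set c1 : ℕ := (2*g+1).choose g with hc1
  set c2 : ℕ := (2*g).choose (g-1) with hc2
  set c0 : ℕ := (2*g+2).choose (g+1) with hc0
  have hcard_e : ∀ i : Fin (2*g+2), (univ.erase i).card = 2*g+1 := by
    intro i
    rw [card_erase_of_mem (mem_univ i), card_univ, Fintype.card_fin]
    omega
  have key1 : ∑ S ∈ powersetCard (g+1) (univ : Finset (Fin (2*g+2))), ∑ i ∈ S, u i
      = (c1 : ℂ) * B := by
    rw [mySum_subsets_single]
    have h4 : ∀ i ∈ (univ : Finset (Fin (2*g+2))),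
        (((((univ : Finset (Fin (2*g+2))).powersetCard (g+1)).filter
          (fun S => i ∈ S))).card : ℂ) * u i = (c1 : ℂ) * u i := by
      intro i _
      rw [myCard_filter_mem univ i (mem_univ i) g, hcard_e i]
    rw [sum_congr rfl h4, ← mul_sum, ← hB]
  have key1sq : ∑ S ∈ powersetCard (g+1) (univ : Finset (Fin (2*g+2))), ∑ i ∈ S, (u i)^2
      = (c1 : ℂ) * A := by
    rw [mySum_subsets_single]
    have h4 : ∀ i ∈ (univ : Finset (Fin (2*g+2))),
        (((((univ : Finset (Fin (2*g+2))).powersetCard (g+1)).filter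
          (fun S => i ∈ S))).card : ℂ) * (u i)^2 = (c1 : ℂ) * (u i)^2 := by
      intro i _
      rw [myCard_filter_mem univ i (mem_univ i) g, hcard_e i]
    rw [sum_congr rfl h4, ← mul_sum, ← hA]
  have keypair : ∑ S ∈ powersetCard (g+1) (univ : Finset (Fin (2*g+2))),
      ∑ i ∈ S, ∑ j ∈ S.erase i, u i * u j = (c2 : ℂ) * (B^2 - A) := by
    rw [mySum_subsets_pair]
    have h4 : ∀ i ∈ (univ : Finset (Fin (2*g+2))), ∀ j ∈ univ.erase i,
        (((((univ : Finset (Fin (2*g+2))).powersetCard (g+1)).filter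
          (fun S => i ∈ S ∧ j ∈ S))).card : ℂ) * (u i * u j) = (c2 : ℂ) * (u i * u j) := by
      intro i _ j hj
      have hji : j ≠ i := (mem_erase.1 hj).1
      have hgg : g + 1 = (g - 1) + 2 := by omega
      rw [hgg, myCard_filter_pair univ i j hji.symm (mem_univ i) (mem_univ j) (g-1)]
      rw [card_erase_of_mem (mem_erase.2 ⟨hji, mem_univ j⟩), hcard_e i]
      have e5 : 2*g+1-1 = 2*g := by omega
      rw [e5]
    rw [sum_congr rfl fun i hi => sum_congr rfl (h4 i hi)]
    have h5 : ∀ i ∈ (univ : Finset (Fin (2*g+2))),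
        ∑ j ∈ univ.erase i, (c2 : ℂ) * (u i * u j)
          = (c2 : ℂ) * ∑ j ∈ univ.erase i, u i * u j := (fun i _ => (mul_sum _ _ _).symm)
    rw [sum_congr rfl h5, ← mul_sum, pairsum]
  have key2 : ∑ S ∈ powersetCard (g+1) (univ : Finset (Fin (2*g+2))), (∑ i ∈ S, u i)^2
      = (c1 : ℂ) * A + (c2 : ℂ) * (B^2 - A) := by
    have hsq : ∀ S ∈ powersetCard (g+1) (univ : Finset (Fin (2*g+2))),
        (∑ i ∈ S, u i)^2 = ∑ i ∈ S, (u i)^2 + ∑ i ∈ S, ∑ j ∈ S.erase i, u i * u j := by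
      intro S _
      rw [sq, sum_mul, ← sum_add_distrib]
      refine sum_congr rfl fun i hi => ?_
      have h6 := Finset.add_sum_erase S u hi
      rw [← h6, mul_add, sq, mul_sum]
    rw [sum_congr rfl hsq, sum_add_distrib, key1sq, keypair]
  -- rewrite the goal
  have honediv : ∀ S ∈ powersetCard (g+1) (univ : Finset (Fin (2*g+2))),
      (2 * ∑ i ∈ S, 1 / (x - e i) - deriv (fun z => ∏ m, (z - e m)) x / F) ^ 2
        = 4*(∑ i ∈ S, u i)^2 - 4*B*(∑ i ∈ S, u i) + B^2 := by
    intro S _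
    have : ∑ i ∈ S, 1 / (x - e i) = ∑ i ∈ S, u i :=
      sum_congr rfl fun i _ => one_div _
    rw [this, hD1x, mul_div_cancel_left₀ B hF0]
    ring
  show ∑ S ∈ powersetCard (g + 1) (univ : Finset (Fin (2 * g + 2))),
        (2 * ∑ i ∈ S, 1 / (x - e i) - deriv (fun z => ∏ m, (z - e m)) x / F) ^ 2
      = 2 * (c1 : ℂ) *
          ((2 * (g : ℂ) + 1) * (deriv (fun z => ∏ m, (z - e m)) x) ^ 2
            - 2 * ((g : ℂ) + 1) * F * deriv (deriv (fun z => ∏ m, (z - e m))) x) /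
          ((2 * (g : ℂ) + 1) * F ^ 2)
  rw [sum_congr rfl honediv, sum_add_distrib, sum_sub_distrib, ← mul_sum, ← mul_sum,
    sum_const, card_powersetCard, card_univ, Fintype.card_fin, key1, key2, hD1x, hD2x,
    nsmul_eq_mul, ← hc0]
  -- numeric identities
  have r1n : c0 = 2 * c1 := by
    rw [hc0, hc1]
    have e1 : 2*g+2 = (2*g+1)+1 := by omega
    have e2 : g + 1 ≤ 2*g+1 := by omega
    have e3 : (2*g+1) - (g+1) = g := by omega
    have hsymm : (2*g+1).choose (g+1) = (2*g+1).choose g := by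
      rw [← Nat.choose_symm e2, e3]
    rw [e1, Nat.choose_succ_succ (2*g+1) g]
    simp only [Nat.succ_eq_add_one]
    rw [hsymm]
    omega
  have r4n : (2*g+1) * c2 = g * c1 := by
    have h7 := Nat.add_one_mul_choose_eq (2*g) (g-1)
    have e4 : g - 1 + 1 = g := by omega
    rw [e4] at h7
    rw [hc1, hc2]
    exact h7.trans (mul_comm _ _)
  have r1 : (c0 : ℂ) = 2 * (c1 : ℂ) := by exact_mod_cast r1n
  have r4 : (2*(g:ℂ)+1) * (c2 : ℂ) = (g:ℂ) * (c1 : ℂ) := by exact_mod_cast r4n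
  have hden : (2*(g:ℂ)+1) * F^2 ≠ 0 := by
    have h9 : ((2*g+1 : ℕ) : ℂ) ≠ 0 := Nat.cast_ne_zero.2 (by omega)
    push_cast at h9
    exact mul_ne_zero h9 (pow_ne_zero 2 hF0)
  rw [eq_div_iff hden]
  linear_combination ((2*(g:ℂ)+1)*F^2*B^2) * r1 + (4*F^2*B^2 - 4*F^2*A) * r4
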